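/- The process (ζ_n)_{n≥0} of eventual-spreader indicators of the Reverse Firework process has the law of the discrete renewal process with inter-arrival distribution q_k = (1-α_{k-1})·∏_{i=0}^{k-2} α_i: conditionally on ζ_0^{n-1} = a_0^{n-1} with a_0 = 1, P(ζ_n = 1 | ζ_0^{n-1} = a_0^{n-1}) = 1 - α_{ℓ(a_0^{n-1})}, where ℓ(a_0^{n-1}) is the number of zeros after the last 1 in a_0^{n-1}. -/

import Mathlib

open MeasureTheory ProbabilityTheory Filter Finset
open scoped ENNReal

/-- the eventual-spreader indicators `(ζ_n)` of the Reverse Firework process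
form a discrete renewal process: conditionally on `ζ_0^{n-1} = a_0^{n-1}` (with `a_0 = 1`),
`P(ζ_n = 1 | ζ_0^{n-1} = a_0^{n-1}) = 1 - α_{ℓ(a_0^{n-1})}`, where `ℓ(a_0^{n-1})` is the
number of zeros after the last `1` in `a_0^{n-1}`.  The conditional probability is stated in
multiplicative form. -/
theorem rumor_stmt_12 {Ω : Type*} [MeasurableSpace Ω] (P : Measure Ω) [IsProbabilityMeasure P]
    (R : ℕ → Ω → ℕ) (hmeas : ∀ i, Measurable (R i))
    (hindep : iIndepFun R P)
    (hident : ∀ i, Measure.map (R i) P = Measure.map (R 0) P)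
    (α : ℕ → ℝ≥0∞) (hα : ∀ k, P {ω | R 0 ω ≤ k} = α k)
    (hle1 : ∀ k, α k ≤ 1) (hα0 : 0 < α 0 ∧ α 0 < 1)
    (ζ : ℕ → Ω → Bool)
    (hζ0 : ∀ ω, ζ 0 ω = true)
    (hζ : ∀ n : ℕ, 0 < n → ∀ ω,
      (ζ n ω = true ↔ ∃ m < n, ζ m ω = true ∧ n - m ≤ R n ω)) :
    ∀ (n : ℕ), 1 ≤ n → ∀ (a : ℕ → Bool), a 0 = true →
      P ({ω | ∀ i < n, ζ i ω = a i} ∩ {ω | ζ n ω = true}) =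
        (1 - α (sInf {i : ℕ | a (n - 1 - i) = true})) *
          P {ω | ∀ i < n, ζ i ω = a i} := by
  intro n hn a ha0
  set ℓ := sInf {i : ℕ | a (n - 1 - i) = true} with hℓdef
  have hmem : (n - 1) ∈ {i : ℕ | a (n - 1 - i) = true} := by
    simp [Nat.sub_self, ha0]
  have hℓle : ℓ ≤ n - 1 := Nat.sInf_le hmem
  have hℓa : a (n - 1 - ℓ) = true := Nat.sInf_mem ⟨_, hmem⟩
  -- Step 1: rewrite the intersected event in terms of `R n`.
  have hset : {ω | ∀ i < n, ζ i ω = a i} ∩ {ω | ζ n ω = true}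
      = {ω | ∀ i < n, ζ i ω = a i} ∩ {ω | ℓ + 1 ≤ R n ω} := by
    ext ω
    simp only [Set.mem_inter_iff, Set.mem_setOf_eq]
    constructor
    · rintro ⟨hA, hz⟩
      refine ⟨hA, ?_⟩
      obtain ⟨m, hm, hzm, hR⟩ := (hζ n (by omega) ω).1 hz
      have ham : a m = true := by rw [← hA m hm]; exact hzm
      have hi : ℓ ≤ n - 1 - m := Nat.sInf_le (by
        simpa [show n - 1 - (n - 1 - m) = m by omega] using ham)
      omega
    · rintro ⟨hA, hR⟩
      refine ⟨hA, (hζ n (by omega) ω).2 ⟨n - 1 - ℓ, by omega, ?_, by omega⟩⟩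
      rw [hA _ (by omega)]
      exact hℓa
  -- the comap σ-algebras
  set 𝔪 : ℕ → MeasurableSpace Ω :=
    fun i => MeasurableSpace.comap (R i) inferInstance with h𝔪
  have h𝔪le : ∀ i, 𝔪 i ≤ ‹MeasurableSpace Ω› := fun i => (hmeas i).comap_le
  have hRmeas : ∀ (i : ℕ) (s : Set ℕ), MeasurableSet[𝔪 i] (R i ⁻¹' s) := by
    intro i s
    exact ⟨s, trivial, rfl⟩
  -- Step 2: `{ζ i = true}` is measurable w.r.t. σ(R_j, j ≤ i).
  have hζmeas : ∀ i : ℕ,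
      MeasurableSet[⨆ j ∈ Set.Iic i, 𝔪 j] {ω | ζ i ω = true} := by
    intro i
    induction i using Nat.strong_induction_on with
    | _ i ih =>
      rcases Nat.eq_zero_or_pos i with h0 | hpos
      · subst h0
        have : {ω | ζ 0 ω = true} = Set.univ := by
          ext ω; simp [hζ0]
        rw [this]; exact MeasurableSet.univ
      · have hrw : {ω | ζ i ω = true}
            = ⋃ m ∈ Finset.range i, ({ω | ζ m ω = true} ∩ {ω | i - m ≤ R i ω}) := by
          ext ω
          simp only [Set.mem_setOf_eq, Set.mem_iUnion, Set.mem_inter_iff, Finset.mem_range,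
            exists_prop]
          rw [hζ i hpos ω]
        rw [hrw]
        refine MeasurableSet.biUnion (Finset.range i).countable_toSet fun m hm => ?_
        have hmi : m < i := Finset.mem_range.1 hm
        refine MeasurableSet.inter ?_ ?_
        · have hle : (⨆ j ∈ Set.Iic m, 𝔪 j) ≤ ⨆ j ∈ Set.Iic i, 𝔪 j :=
            biSup_mono fun j hj => le_trans hj (le_of_lt hmi)
          exact hle _ (ih m hmi)
        · have hle : 𝔪 i ≤ ⨆ j ∈ Set.Iic i, 𝔪 j := le_biSup 𝔪 (Set.mem_Iic.2 le_rfl)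
          exact hle _ (hRmeas i {k | i - m ≤ k})
  -- Step 3: the past event is measurable w.r.t. σ(R_j, j < n).
  have hA_meas : MeasurableSet[⨆ j ∈ Set.Iio n, 𝔪 j] {ω | ∀ i < n, ζ i ω = a i} := by
    have hrw : {ω | ∀ i < n, ζ i ω = a i}
        = ⋂ i ∈ Finset.range n, {ω | ζ i ω = a i} := by
      ext ω; simp
    rw [hrw]
    refine MeasurableSet.biInter (Finset.range n).countable_toSet fun i hi => ?_
    have hin : i < n := Finset.mem_range.1 hi
    have hle : (⨆ j ∈ Set.Iic i, 𝔪 j) ≤ ⨆ j ∈ Set.Iio n, 𝔪 j :=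
      biSup_mono fun j hj => lt_of_le_of_lt hj hin
    cases hai : a i with
    | true => exact hle _ (hζmeas i)
    | false =>
      have : {ω | ζ i ω = false} = {ω | ζ i ω = true}ᶜ := by
        ext ω; simp
      rw [this]; exact hle _ (hζmeas i).compl
  -- Step 4: independence of the past and `R n`.
  have hindep' : Indep (⨆ j ∈ Set.Iio n, 𝔪 j) (⨆ j ∈ ({n} : Set ℕ), 𝔪 j) P :=
    indep_iSup_of_disjoint h𝔪le hindep (by
      simp only [Set.disjoint_left, Set.mem_Iio, Set.mem_singleton_iff]
      intro j hj; omega)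
  have hB_meas : MeasurableSet[⨆ j ∈ ({n} : Set ℕ), 𝔪 j] {ω | ℓ + 1 ≤ R n ω} := by
    have hle : 𝔪 n ≤ ⨆ j ∈ ({n} : Set ℕ), 𝔪 j := le_biSup 𝔪 rfl
    exact hle _ (hRmeas n {k | ℓ + 1 ≤ k})
  have hmul : P ({ω | ∀ i < n, ζ i ω = a i} ∩ {ω | ℓ + 1 ≤ R n ω})
      = P {ω | ∀ i < n, ζ i ω = a i} * P {ω | ℓ + 1 ≤ R n ω} :=
    (hindep'.indepSet_of_measurableSet hA_meas hB_meas).measure_inter_eq_mul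
  -- Step 5: compute `P {ℓ + 1 ≤ R n}`.
  have hαn : P {ω | R n ω ≤ ℓ} = α ℓ := by
    have h1 : P {ω | R n ω ≤ ℓ} = (Measure.map (R n) P) {k | k ≤ ℓ} := by
      rw [Measure.map_apply (hmeas n) (trivial : MeasurableSet {k : ℕ | k ≤ ℓ})]
      rfl
    have h2 : P {ω | R 0 ω ≤ ℓ} = (Measure.map (R 0) P) {k | k ≤ ℓ} := by
      rw [Measure.map_apply (hmeas 0) (trivial : MeasurableSet {k : ℕ | k ≤ ℓ})]
      rfl
    rw [h1, hident n, ← h2, hα]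
  have hPB : P {ω | ℓ + 1 ≤ R n ω} = 1 - α ℓ := by
    have hc : {ω | ℓ + 1 ≤ R n ω} = {ω | R n ω ≤ ℓ}ᶜ := by
      ext ω; simp only [Set.mem_setOf_eq, Set.mem_compl_iff, not_le]; omega
    rw [hc, measure_compl ?_ (measure_ne_top P _), measure_univ, hαn]
    exact (hmeas n) (measurableSet_le measurable_id measurable_const)
  rw [hset, hmul, hPB, mul_comm]
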